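/- For every positive integer m and every p ∈ [1, ∞), the quantile-Hoeffding operator I_m : L^p(0,1) → L^p(0,1) is linear and bounded, and satisfies ‖I_m(h)‖_p ≤ ‖h‖_p for all h ∈ L^p(0,1), with this bound holding uniformly in m. -/

import Mathlib

open MeasureTheory Filter Set
open scoped BoundedContinuousFunction ProbabilityTheory

noncomputable section

/-- Density of the Beta(j, m-j+1) distribution. -/
def betaDens (m j : ℕ) (u : ℝ) : ℝ :=
  (m : ℝ) * ((m - 1).choose (j - 1) : ℝ) * u ^ (j - 1) * (1 - u) ^ (m - j)

/-- Quantile function (left-continuous generalized inverse). -/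
def quantile (G : ℝ → ℝ) (p : ℝ) : ℝ :=
  sInf {x : ℝ | p ≤ G x}

/-- `G` is a cumulative distribution function on ℝ. -/
structure IsCDF (G : ℝ → ℝ) : Prop where
  mono : Monotone G
  rightCont : ∀ x, ContinuousWithinAt G (Ici x) x
  tendsto_atBot : Tendsto G atBot (nhds 0)
  tendsto_atTop : Tendsto G atTop (nhds 1)

/-- `G` has finite mean: its quantile function is integrable on (0,1). -/
def HasFiniteMean (G : ℝ → ℝ) : Prop :=
  IntegrableOn (fun u => quantile G u) (Ioo (0:ℝ) 1)

/-- Expected j-th order statistic from a sample of size m drawn from G. -/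
def muOS (m j : ℕ) (G : ℝ → ℝ) : ℝ :=
  ∫ u in Ioo (0:ℝ) 1, quantile G u * betaDens m j u

/-- The Hoeffding CDF operator `H_m`. -/
def hoeffCDF (m : ℕ) (G : ℝ → ℝ) (x : ℝ) : ℝ :=
  (m : ℝ)⁻¹ * ∑ j ∈ Finset.Icc 1 m, if muOS m j G ≤ x then (1:ℝ) else 0

/-- The quantile-Hoeffding operator `I_m`. -/
def quantHoeff (m : ℕ) (h : ℝ → ℝ) (u : ℝ) : ℝ :=
  ∑ j ∈ Finset.Icc 1 m,
    (∫ t in Ioo (0:ℝ) 1, h t * betaDens m j t) *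
      (if u ∈ Ioc (((j : ℝ) - 1) / m) ((j : ℝ) / m) then (1:ℝ) else 0)

/-- Empirical CDF of the reals `x 0, ..., x (n-1)`. -/
def ecdf (n : ℕ) (x : ℕ → ℝ) (t : ℝ) : ℝ :=
  (n : ℝ)⁻¹ * ∑ i ∈ Finset.range n, if x i ≤ t then (1:ℝ) else 0

/-- Empirical CDF of the random sample `X 0, ..., X (n-1)`. -/
def empCDF {Ω : Type*} (X : ℕ → Ω → ℝ) (n : ℕ) (ω : Ω) : ℝ → ℝ :=
  fun t => (n : ℝ)⁻¹ * ∑ i ∈ Finset.range n, if X i ω ≤ t then (1:ℝ) else 0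

namespace QHAux

lemma betaDens_cont (m j : ℕ) : Continuous (betaDens m j) := by
  unfold betaDens; fun_prop

lemma betaDens_nonneg (m j : ℕ) {t : ℝ} (h0 : 0 ≤ t) (h1 : t ≤ 1) :
    0 ≤ betaDens m j t := by
  unfold betaDens
  have h1' : (0:ℝ) ≤ 1 - t := by linarith
  positivity

lemma betaDens_le (m j : ℕ) {t : ℝ} (h0 : 0 ≤ t) (h1 : t ≤ 1) :
    betaDens m j t ≤ (m : ℝ) * ((m - 1).choose (j - 1) : ℝ) := by
  unfold betaDens
  have h1' : (0:ℝ) ≤ 1 - t := by linarith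
  have ht1 : t ^ (j - 1) ≤ 1 := pow_le_one₀ h0 h1
  have ht2 : (1 - t) ^ (m - j) ≤ 1 := pow_le_one₀ h1' (by linarith)
  have hC : (0:ℝ) ≤ (m : ℝ) * ((m - 1).choose (j - 1) : ℝ) := by positivity
  calc (m : ℝ) * ((m - 1).choose (j - 1) : ℝ) * t ^ (j - 1) * (1 - t) ^ (m - j)
      ≤ (m : ℝ) * ((m - 1).choose (j - 1) : ℝ) * t ^ (j - 1) * 1 := by
        have := pow_nonneg h0 (j - 1)
        gcongr
    _ ≤ (m : ℝ) * ((m - 1).choose (j - 1) : ℝ) * 1 * 1 := by gcongr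
    _ = (m : ℝ) * ((m - 1).choose (j - 1) : ℝ) := by ring

lemma integral_pow_mul_one_sub_pow (a b : ℕ) :
    ∫ x in (0:ℝ)..1, x ^ a * (1 - x) ^ b
      = (a.factorial * b.factorial : ℝ) / ((a + b + 1).factorial : ℝ) := by
  induction b generalizing a with
  | zero =>
    simp only [pow_zero, mul_one, integral_pow, one_pow, Nat.factorial_zero, Nat.cast_one]
    rw [Nat.factorial_succ]
    have : ((a.factorial : ℝ)) ≠ 0 := Nat.cast_ne_zero.mpr (Nat.factorial_ne_zero a)
    push_cast
    field_simp
    simp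
  | succ b ih =>
    have hu : ∀ x ∈ uIcc (0:ℝ) 1, HasDerivAt (fun y : ℝ => (1 - y) ^ (b + 1))
        ((((b:ℝ)+1) * (1 - x) ^ b) * (-1)) x := by
      intro x _
      have h1 : HasDerivAt (fun y : ℝ => 1 - y) (-1) x := by
        simpa using (hasDerivAt_id x).const_sub 1
      have h2 := h1.pow (b + 1)
      refine h2.congr_deriv ?_
      push_cast
      simp [mul_comm]
    have hv : ∀ x ∈ uIcc (0:ℝ) 1, HasDerivAt (fun y : ℝ => y ^ (a + 1) / ((a:ℝ)+1))
        (x ^ a) x := by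
      intro x _
      have h2 := (hasDerivAt_pow (a + 1) x).div_const ((a:ℝ)+1)
      refine h2.congr_deriv ?_
      have : ((a:ℝ) + 1) ≠ 0 := by positivity
      push_cast
      field_simp
    have key := intervalIntegral.integral_mul_deriv_eq_deriv_mul hu hv
      (Continuous.intervalIntegrable (by fun_prop) 0 1)
      (Continuous.intervalIntegrable (by fun_prop) 0 1)
    have hcomm : ∫ x in (0:ℝ)..1, x ^ a * (1 - x) ^ (b + 1)
        = ∫ x in (0:ℝ)..1, (1 - x) ^ (b + 1) * x ^ a :=
      intervalIntegral.integral_congr fun x _ => mul_comm _ _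
    rw [hcomm, key]
    have hsimp : ∀ x : ℝ, ((((b:ℝ)+1) * (1 - x) ^ b) * (-1)) * (x ^ (a+1) / ((a:ℝ)+1))
        = -((((b:ℝ)+1) / ((a:ℝ)+1)) * (x ^ (a+1) * (1 - x) ^ b)) := by
      intro x
      simp only [div_eq_mul_inv]
      ring
    rw [intervalIntegral.integral_congr (fun x _ => hsimp x), intervalIntegral.integral_neg,
      intervalIntegral.integral_const_mul, ih (a + 1)]
    have he : (a + 1) + b + 1 = a + (b + 1) + 1 := by omega
    rw [he]
    have hne1 : ((a:ℝ) + 1) ≠ 0 := by positivity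
    have hne2 : (((a + (b+1) + 1).factorial : ℝ)) ≠ 0 :=
      Nat.cast_ne_zero.mpr (Nat.factorial_ne_zero _)
    rw [Nat.factorial_succ a, Nat.factorial_succ b]
    push_cast
    field_simp
    ring

lemma integral_Ioo_betaDens (m j : ℕ) (hj1 : 1 ≤ j) (hjm : j ≤ m) :
    ∫ t in Ioo (0:ℝ) 1, betaDens m j t = 1 := by
  have hm : 0 < m := lt_of_lt_of_le hj1 hjm
  have h1 : ∫ t in Ioo (0:ℝ) 1, betaDens m j t = ∫ t in (0:ℝ)..1, betaDens m j t := by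
    rw [intervalIntegral.integral_of_le zero_le_one, integral_Ioc_eq_integral_Ioo]
  rw [h1]
  unfold betaDens
  have hre : ∀ t : ℝ, (m : ℝ) * ((m - 1).choose (j - 1) : ℝ) * t ^ (j - 1) * (1 - t) ^ (m - j)
      = ((m : ℝ) * ((m - 1).choose (j - 1) : ℝ)) * (t ^ (j - 1) * (1 - t) ^ (m - j)) := by
    intro t; ring
  rw [intervalIntegral.integral_congr (fun t _ => hre t),
    intervalIntegral.integral_const_mul, integral_pow_mul_one_sub_pow]
  have he : (j - 1) + (m - j) + 1 = m := by omega
  rw [he]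
  have hnat : m * (m - 1).choose (j - 1) * ((j - 1).factorial * (m - j).factorial)
      = m.factorial := by
    have h := Nat.choose_mul_factorial_mul_factorial (show j - 1 ≤ m - 1 by omega)
    have h2 : m - 1 - (j - 1) = m - j := by omega
    rw [h2] at h
    calc m * (m - 1).choose (j - 1) * ((j - 1).factorial * (m - j).factorial)
        = m * ((m - 1).choose (j - 1) * (j - 1).factorial * (m - j).factorial) := by ring
      _ = m * (m - 1).factorial := by rw [h]
      _ = m.factorial := Nat.mul_factorial_pred hm.ne'
  have hfac : (m.factorial : ℝ) ≠ 0 := Nat.cast_ne_zero.mpr (Nat.factorial_ne_zero _)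
  rw [mul_div_assoc'] at *
  rw [div_eq_one_iff_eq hfac]
  exact_mod_cast hnat

lemma sum_betaDens (m : ℕ) (hm : 0 < m) (t : ℝ) :
    ∑ j ∈ Finset.Icc 1 m, betaDens m j t = m := by
  rw [← Finset.Ico_add_one_right_eq_Icc, Finset.sum_Ico_eq_sum_range]
  have hm1 : m + 1 - 1 = m := by omega
  rw [hm1]
  have hterm : ∀ k, betaDens m (1 + k) t
      = (m : ℝ) * (((m - 1).choose k : ℝ) * (t ^ k * (1 - t) ^ (m - 1 - k))) := by
    intro k
    unfold betaDens
    have e1 : 1 + k - 1 = k := by omega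
    have e2 : m - (1 + k) = m - 1 - k := by omega
    rw [e1, e2]; ring
  simp_rw [hterm]
  rw [← Finset.mul_sum]
  have hbin := add_pow t (1 - t) (m - 1)
  have hm2 : m - 1 + 1 = m := by omega
  rw [hm2] at hbin
  have ht : t + (1 - t) = 1 := by ring
  rw [ht, one_pow] at hbin
  have : ∑ k ∈ Finset.range m, ((m - 1).choose k : ℝ) * (t ^ k * (1 - t) ^ (m - 1 - k))
      = ∑ k ∈ Finset.range m, t ^ k * (1 - t) ^ (m - 1 - k) * ((m - 1).choose k : ℝ) :=
    Finset.sum_congr rfl fun k _ => by ring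
  rw [this, ← hbin, mul_one]

lemma integrableOn_mul_betaDens (m j : ℕ) {f : ℝ → ℝ}
    (hf : Integrable f (volume.restrict (Ioo (0:ℝ) 1))) :
    Integrable (fun t => f t * betaDens m j t) (volume.restrict (Ioo (0:ℝ) 1)) := by
  have hb : ∀ᵐ t ∂(volume.restrict (Ioo (0:ℝ) 1)),
      ‖betaDens m j t‖ ≤ (m : ℝ) * ((m - 1).choose (j - 1) : ℝ) := by
    rw [ae_restrict_iff' measurableSet_Ioo]
    filter_upwards with t ht
    rw [Real.norm_eq_abs, abs_of_nonneg (betaDens_nonneg m j ht.1.le ht.2.le)]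
    exact betaDens_le m j ht.1.le ht.2.le
  have h2 := hf.bdd_mul ((betaDens_cont m j).aestronglyMeasurable) hb
  exact h2.congr (ae_of_all _ fun t => mul_comm _ _)

lemma abs_integral_rpow_le (m j : ℕ) (hj1 : 1 ≤ j) (hjm : j ≤ m) {p : ℝ} (hp : 1 ≤ p)
    {h : ℝ → ℝ} (hmem : MemLp h (ENNReal.ofReal p) (volume.restrict (Ioo (0:ℝ) 1))) :
    |∫ t in Ioo (0:ℝ) 1, h t * betaDens m j t| ^ p
      ≤ ∫ t in Ioo (0:ℝ) 1, |h t| ^ p * betaDens m j t := by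
  have hp0 : (0:ℝ) ≤ p := by linarith
  set μ0 := volume.restrict (Ioo (0:ℝ) 1) with hμ0
  haveI : IsFiniteMeasure μ0 := by
    constructor
    rw [hμ0, Measure.restrict_apply_univ, Real.volume_Ioo]
    exact ENNReal.ofReal_lt_top
  set W : ℝ → NNReal := fun t => (betaDens m j t).toNNReal with hW
  have hWmeas : Measurable W := (betaDens_cont m j).measurable.real_toNNReal
  set ν := μ0.withDensity (fun t => (W t : ENNReal)) with hν
  have haeb : ∀ᵐ t ∂μ0, 0 ≤ betaDens m j t := by
    rw [hμ0, ae_restrict_iff' measurableSet_Ioo]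
    exact ae_of_all _ fun t ht => betaDens_nonneg m j ht.1.le ht.2.le
  have hWcoe : ∀ᵐ t ∂μ0, ((W t : ℝ)) = betaDens m j t :=
    haeb.mono fun t ht => by simp [hW, Real.coe_toNNReal _ ht]
  have hInt_w : Integrable (betaDens m j) μ0 :=
    ((betaDens_cont m j).integrableOn_Icc).mono_set Ioo_subset_Icc_self
  haveI hprob : IsProbabilityMeasure ν := by
    constructor
    rw [hν, withDensity_apply _ MeasurableSet.univ, setLIntegral_univ]
    have hcoe : ∀ t, ((W t : ENNReal)) = ENNReal.ofReal (betaDens m j t) := fun t => rfl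
    simp_rw [hcoe]
    rw [← ofReal_integral_eq_lintegral_ofReal hInt_w haeb]
    have : ∫ t, betaDens m j t ∂μ0 = 1 := integral_Ioo_betaDens m j hj1 hjm
    rw [this, ENNReal.ofReal_one]
  have hconv : ∀ f : ℝ → ℝ, ∫ t, f t ∂ν = ∫ t in Ioo (0:ℝ) 1, f t * betaDens m j t := by
    intro f
    rw [hν, integral_withDensity_eq_integral_smul hWmeas]
    refine integral_congr_ae (hWcoe.mono fun t ht => ?_)
    simp only [NNReal.smul_def, smul_eq_mul, ht, mul_comm]
  have hint_tr : ∀ f : ℝ → ℝ, Integrable (fun t => f t * betaDens m j t) μ0 →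
      Integrable f ν := by
    intro f hf
    rw [hν, integrable_withDensity_iff_integrable_smul hWmeas]
    exact hf.congr (hWcoe.mono fun t ht => by
      simp only [NNReal.smul_def, smul_eq_mul, ht, mul_comm])
  have hint_h : Integrable h μ0 := hmem.integrable (ENNReal.one_le_ofReal.mpr hp)
  have hint_abs : Integrable (fun t => |h t|) μ0 := hint_h.abs
  have hint_rpow : Integrable (fun t => |h t| ^ p) μ0 := by
    have h2 := hmem.integrable_norm_rpow (by simp [ENNReal.ofReal_eq_zero]; linarith)
      ENNReal.ofReal_ne_top
    simpa [Real.norm_eq_abs, ENNReal.toReal_ofReal hp0] using h2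
  have hνabs : Integrable (fun t => |h t|) ν := hint_tr _ (integrableOn_mul_betaDens m j hint_abs)
  have hνrpow : Integrable (fun t => |h t| ^ p) ν :=
    hint_tr _ (integrableOn_mul_betaDens m j hint_rpow)
  have hconvex : ConvexOn ℝ (Ici 0) (fun x : ℝ => x ^ p) := convexOn_rpow hp
  have hcont : ContinuousOn (fun x : ℝ => x ^ p) (Ici 0) := by
    refine (continuous_iff_continuousAt.mpr fun x => ?_).continuousOn
    exact Real.continuousAt_rpow_const x p (Or.inr hp0)
  have hjensen := hconvex.map_integral_le hcont isClosed_Ici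
    (ae_of_all _ fun t => abs_nonneg (h t)) hνabs hνrpow
  have h1 : ∫ t in Ioo (0:ℝ) 1, h t * betaDens m j t = ∫ t, h t ∂ν := (hconv h).symm
  rw [h1]
  calc |∫ t, h t ∂ν| ^ p
      ≤ (∫ t, |h t| ∂ν) ^ p := by
        refine Real.rpow_le_rpow (abs_nonneg _) ?_ hp0
        simpa [Real.norm_eq_abs] using norm_integral_le_integral_norm (μ := ν) h
    _ ≤ ∫ t, |h t| ^ p ∂ν := hjensen
    _ = ∫ t in Ioo (0:ℝ) 1, |h t| ^ p * betaDens m j t := hconv _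

end QHAux

open QHAux

/-- For every `m` and every `p ∈ [1, ∞)`, the quantile-Hoeffding operator
`I_m : L^p(0,1) → L^p(0,1)` is linear, and is bounded with operator norm at most `1`
(uniformly in `m`): `‖I_m(h)‖_p ≤ ‖h‖_p` for all `h ∈ L^p(0,1)`. -/
theorem quantHoeff_linear_and_bounded
    (m : ℕ) (hm : 0 < m) (p : ℝ) (hp : 1 ≤ p) :
    (∀ h g : ℝ → ℝ,
      MemLp h (ENNReal.ofReal p) (volume.restrict (Ioo (0:ℝ) 1)) →
      MemLp g (ENNReal.ofReal p) (volume.restrict (Ioo (0:ℝ) 1)) →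
      ∀ a b : ℝ, ∀ u : ℝ,
        quantHoeff m (fun t => a * h t + b * g t) u
          = a * quantHoeff m h u + b * quantHoeff m g u) ∧
    (∀ h : ℝ → ℝ,
      MemLp h (ENNReal.ofReal p) (volume.restrict (Ioo (0:ℝ) 1)) →
      MemLp (quantHoeff m h) (ENNReal.ofReal p) (volume.restrict (Ioo (0:ℝ) 1)) ∧
      (∫ u in Ioo (0:ℝ) 1, |quantHoeff m h u| ^ p) ^ (1/p)
        ≤ (∫ u in Ioo (0:ℝ) 1, |h u| ^ p) ^ (1/p)) := by
  have hmR : (0:ℝ) < m := Nat.cast_pos.mpr hm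
  have hp0 : (0:ℝ) ≤ p := by linarith
  have hp0' : (0:ℝ) < p := by linarith
  haveI : IsFiniteMeasure (volume.restrict (Ioo (0:ℝ) 1)) := by
    constructor
    rw [Measure.restrict_apply_univ, Real.volume_Ioo]
    exact ENNReal.ofReal_lt_top
  constructor
  · intro h g hh hg a b u
    have hih : Integrable h (volume.restrict (Ioo (0:ℝ) 1)) :=
      hh.integrable (ENNReal.one_le_ofReal.mpr hp)
    have hig : Integrable g (volume.restrict (Ioo (0:ℝ) 1)) :=
      hg.integrable (ENNReal.one_le_ofReal.mpr hp)
    simp only [quantHoeff]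
    rw [Finset.mul_sum, Finset.mul_sum, ← Finset.sum_add_distrib]
    refine Finset.sum_congr rfl fun j _ => ?_
    have hkey : ∫ t in Ioo (0:ℝ) 1, (a * h t + b * g t) * betaDens m j t
        = a * (∫ t in Ioo (0:ℝ) 1, h t * betaDens m j t)
          + b * (∫ t in Ioo (0:ℝ) 1, g t * betaDens m j t) := by
      have he : ∀ t, (a * h t + b * g t) * betaDens m j t
          = a * (h t * betaDens m j t) + b * (g t * betaDens m j t) := fun t => by ring
      simp_rw [he]
      rw [integral_add ((integrableOn_mul_betaDens m j hih).const_mul a)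
        ((integrableOn_mul_betaDens m j hig).const_mul b), integral_const_mul,
        integral_const_mul]
    rw [hkey]
    split_ifs <;> ring
  · intro h hh
    set c : ℕ → ℝ := fun j => ∫ t in Ioo (0:ℝ) 1, h t * betaDens m j t with hc
    have hmeas : Measurable (quantHoeff m h) := by
      unfold quantHoeff
      exact Finset.measurable_sum _ fun j _ =>
        (Measurable.ite measurableSet_Ioc measurable_const measurable_const).const_mul _
    have hbd : ∀ u, ‖quantHoeff m h u‖ ≤ ∑ j ∈ Finset.Icc 1 m, |c j| := by
      intro u
      rw [Real.norm_eq_abs]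
      have hLq : quantHoeff m h u = ∑ j ∈ Finset.Icc 1 m,
          c j * (if u ∈ Ioc (((j:ℝ) - 1) / (m:ℝ)) ((j:ℝ) / (m:ℝ)) then (1:ℝ) else 0) := by
        simp only [quantHoeff, hc]
      rw [hLq]
      refine (Finset.abs_sum_le_sum_abs _ _).trans (Finset.sum_le_sum fun j _ => ?_)
      rw [abs_mul]
      split_ifs with hu
      · simp
      · simp [abs_nonneg]
    have hmemq : MemLp (quantHoeff m h) (ENNReal.ofReal p) (volume.restrict (Ioo (0:ℝ) 1)) :=
      MemLp.of_bound hmeas.aestronglyMeasurable _ (ae_of_all _ hbd)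
    refine ⟨hmemq, ?_⟩
    have hexists : ∀ u : ℝ, u ∈ Ioo (0:ℝ) 1 → ∃ k ∈ Finset.Icc 1 m,
        u ∈ Ioc (((k:ℝ) - 1) / (m:ℝ)) ((k:ℝ) / (m:ℝ)) := by
      intro u hu
      have hmu : (0:ℝ) < (m:ℝ) * u := mul_pos hmR hu.1
      refine ⟨⌈(m:ℝ) * u⌉₊, ?_, ?_, ?_⟩
      · rw [Finset.mem_Icc]
        refine ⟨Nat.ceil_pos.mpr hmu, Nat.ceil_le.mpr ?_⟩
        nlinarith [hu.2]
      · rw [div_lt_iff₀ hmR]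
        have hlt := Nat.ceil_lt_add_one hmu.le
        nlinarith
      · rw [le_div_iff₀ hmR]
        have hle := Nat.le_ceil ((m:ℝ) * u)
        nlinarith
    have huniq : ∀ u : ℝ, ∀ j k : ℕ,
        u ∈ Ioc (((j:ℝ) - 1) / (m:ℝ)) ((j:ℝ) / (m:ℝ)) →
        u ∈ Ioc (((k:ℝ) - 1) / (m:ℝ)) ((k:ℝ) / (m:ℝ)) → j = k := by
      have haux : ∀ j k : ℕ, j < k → ∀ u : ℝ,
          u ∈ Ioc (((j:ℝ) - 1) / (m:ℝ)) ((j:ℝ) / (m:ℝ)) →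
          u ∈ Ioc (((k:ℝ) - 1) / (m:ℝ)) ((k:ℝ) / (m:ℝ)) → False := by
        intro j k hjk u h1 h2
        have hj : (j:ℝ) ≤ (k:ℝ) - 1 := by
          have h3 : j + 1 ≤ k := hjk
          have h4 : ((j + 1 : ℕ) : ℝ) ≤ (k : ℝ) := Nat.cast_le.mpr h3
          push_cast at h4; linarith
        have h5 : (j:ℝ) / (m:ℝ) ≤ ((k:ℝ) - 1) / (m:ℝ) := by gcongr
        have h6 := h1.2
        have h7 := h2.1
        linarith
      intro u j k h1 h2
      rcases lt_trichotomy j k with hlt | heq | hgt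
      · exact (haux j k hlt u h1 h2).elim
      · exact heq
      · exact (haux k j hgt u h2 h1).elim
    have hpt : ∀ u ∈ Ioo (0:ℝ) 1, |quantHoeff m h u| ^ p
        = ∑ j ∈ Finset.Icc 1 m, |c j| ^ p *
            (if u ∈ Ioc (((j:ℝ) - 1) / (m:ℝ)) ((j:ℝ) / (m:ℝ)) then (1:ℝ) else 0) := by
      intro u hu
      obtain ⟨k, hk, hku⟩ := hexists u hu
      have hnot : ∀ j ∈ Finset.Icc 1 m, j ≠ k →
          u ∉ Ioc (((j:ℝ) - 1) / (m:ℝ)) ((j:ℝ) / (m:ℝ)) := by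
        intro j _ hne hmem
        exact hne (huniq u j k hmem hku)
      have hL : quantHoeff m h u = c k := by
        have hLq : quantHoeff m h u = ∑ j ∈ Finset.Icc 1 m,
            c j * (if u ∈ Ioc (((j:ℝ) - 1) / (m:ℝ)) ((j:ℝ) / (m:ℝ)) then (1:ℝ) else 0) := by
          simp only [quantHoeff, hc]
        rw [hLq, Finset.sum_eq_single_of_mem k hk]
        · simp [hku]
        · intro j hj hne; simp [hnot j hj hne]
      have hR : (∑ j ∈ Finset.Icc 1 m, |c j| ^ p *
            (if u ∈ Ioc (((j:ℝ) - 1) / (m:ℝ)) ((j:ℝ) / (m:ℝ)) then (1:ℝ) else 0))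
          = |c k| ^ p := by
        rw [Finset.sum_eq_single_of_mem k hk]
        · simp [hku]
        · intro j hj hne; simp [hnot j hj hne]
      rw [hL, hR]
    have hint_rpow : Integrable (fun t => |h t| ^ p) (volume.restrict (Ioo (0:ℝ) 1)) := by
      have h2 := hh.integrable_norm_rpow (by simp [ENNReal.ofReal_eq_zero]; linarith)
        ENNReal.ofReal_ne_top
      simpa [Real.norm_eq_abs, ENNReal.toReal_ofReal hp0] using h2
    have hindf : ∀ j : ℕ, (fun u : ℝ =>
          if u ∈ Ioc (((j:ℝ) - 1) / (m:ℝ)) ((j:ℝ) / (m:ℝ)) then (1:ℝ) else 0)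
        = (Ioc (((j:ℝ) - 1) / (m:ℝ)) ((j:ℝ) / (m:ℝ))).indicator (1 : ℝ → ℝ) := by
      intro j; funext u; simp [Set.indicator_apply]
    have hind : ∀ j : ℕ, 1 ≤ j → j ≤ m →
        ∫ u in Ioo (0:ℝ) 1,
          (if u ∈ Ioc (((j:ℝ) - 1) / (m:ℝ)) ((j:ℝ) / (m:ℝ)) then (1:ℝ) else 0) = 1 / m := by
      intro j hj1 hjm
      rw [hindf j]
      rw [integral_indicator_one measurableSet_Ioc, measureReal_def, Measure.restrict_apply measurableSet_Ioc]
      have hge0 : (0:ℝ) ≤ ((j:ℝ) - 1) / (m:ℝ) := by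
        apply div_nonneg _ hmR.le
        have : (1:ℝ) ≤ (j:ℝ) := by exact_mod_cast hj1
        linarith
      have hle1 : (j:ℝ) / (m:ℝ) ≤ 1 := by
        rw [div_le_one hmR]; exact_mod_cast hjm
      have hd : (j:ℝ) / (m:ℝ) - ((j:ℝ) - 1) / (m:ℝ) = 1 / (m:ℝ) := by field_simp; ring
      have hv : volume (Ioc (((j:ℝ) - 1) / (m:ℝ)) ((j:ℝ) / (m:ℝ)) ∩ Ioo 0 1)
          = ENNReal.ofReal (1 / (m:ℝ)) := by
        apply le_antisymm
        · calc volume (Ioc (((j:ℝ) - 1) / (m:ℝ)) ((j:ℝ) / (m:ℝ)) ∩ Ioo 0 1)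
              ≤ volume (Ioc (((j:ℝ) - 1) / (m:ℝ)) ((j:ℝ) / (m:ℝ))) :=
                measure_mono inter_subset_left
            _ = ENNReal.ofReal (1 / (m:ℝ)) := by rw [Real.volume_Ioc, hd]
        · calc ENNReal.ofReal (1 / (m:ℝ))
              = volume (Ioo (((j:ℝ) - 1) / (m:ℝ)) ((j:ℝ) / (m:ℝ))) := by
                rw [Real.volume_Ioo, hd]
            _ ≤ volume (Ioc (((j:ℝ) - 1) / (m:ℝ)) ((j:ℝ) / (m:ℝ)) ∩ Ioo 0 1) := by
                refine measure_mono fun x hx => ?_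
                exact ⟨⟨hx.1, hx.2.le⟩, lt_of_le_of_lt hge0 hx.1, lt_of_lt_of_le hx.2 hle1⟩
      rw [hv, ENNReal.toReal_ofReal (by positivity)]
    have hint_ind : ∀ j : ℕ, Integrable (fun u => |c j| ^ p *
        (if u ∈ Ioc (((j:ℝ) - 1) / (m:ℝ)) ((j:ℝ) / (m:ℝ)) then (1:ℝ) else 0))
        (volume.restrict (Ioo (0:ℝ) 1)) := by
      intro j
      apply Integrable.const_mul
      rw [hindf j]
      exact (integrable_const (1:ℝ)).indicator measurableSet_Ioc
    have hkey : ∫ u in Ioo (0:ℝ) 1, |quantHoeff m h u| ^ p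
        ≤ ∫ u in Ioo (0:ℝ) 1, |h u| ^ p := by
      have e1 : ∫ u in Ioo (0:ℝ) 1, |quantHoeff m h u| ^ p
          = ∫ u in Ioo (0:ℝ) 1, ∑ j ∈ Finset.Icc 1 m, |c j| ^ p *
              (if u ∈ Ioc (((j:ℝ) - 1) / (m:ℝ)) ((j:ℝ) / (m:ℝ)) then (1:ℝ) else 0) :=
        setIntegral_congr_fun measurableSet_Ioo (fun u hu => hpt u hu)
      rw [e1, integral_finset_sum _ (fun j _ => hint_ind j)]
      have e2 : ∀ j ∈ Finset.Icc 1 m,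
          (∫ u in Ioo (0:ℝ) 1, |c j| ^ p *
            (if u ∈ Ioc (((j:ℝ) - 1) / (m:ℝ)) ((j:ℝ) / (m:ℝ)) then (1:ℝ) else 0))
          = |c j| ^ p * (1 / m) := by
        intro j hj
        rw [integral_const_mul, hind j (Finset.mem_Icc.mp hj).1 (Finset.mem_Icc.mp hj).2]
      rw [Finset.sum_congr rfl e2]
      have e3 : ∑ j ∈ Finset.Icc 1 m, |c j| ^ p * (1 / (m:ℝ))
          ≤ ∑ j ∈ Finset.Icc 1 m,
              (∫ t in Ioo (0:ℝ) 1, |h t| ^ p * betaDens m j t) * (1 / (m:ℝ)) := by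
        refine Finset.sum_le_sum fun j hj => ?_
        have hj' := Finset.mem_Icc.mp hj
        exact mul_le_mul_of_nonneg_right
          (abs_integral_rpow_le m j hj'.1 hj'.2 hp hh) (by positivity)
      refine e3.trans (le_of_eq ?_)
      rw [← Finset.sum_mul,
        ← integral_finset_sum _ (fun j _ => integrableOn_mul_betaDens m j hint_rpow)]
      have e4 : ∀ u : ℝ, ∑ j ∈ Finset.Icc 1 m, |h u| ^ p * betaDens m j u
          = |h u| ^ p * m := by
        intro u; rw [← Finset.mul_sum, sum_betaDens m hm u]
      simp_rw [e4]
      rw [integral_mul_const, mul_assoc, mul_one_div, div_self (ne_of_gt hmR), mul_one]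
    exact Real.rpow_le_rpow
      (integral_nonneg fun u => Real.rpow_nonneg (abs_nonneg _) p) hkey
      (div_nonneg zero_le_one hp0)
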